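/- Let K = k(ξ,η,θ,ι) with k a field of characteristic 2, and set F = z^2 + x^3 + (ξ*x + η*y + θ*z + ι)*y^4 ∈ K[x,y,z]. Then the Tjurina ideal (∂F/∂x, ∂F/∂y, ∂F/∂z, F) equals (x^2, y^4, z^2) in K[x,y,z], and the Tjurina algebra K[x,y,z]/(x^2, y^4, z^2) has K-dimension 16. -/

import Mathlib

open MvPolynomial

open MvPolynomial

namespace Stmt15Aux
noncomputable section

lemma root_pow_self {R : Type*} [CommRing R] (n : ℕ) :
    (AdjoinRoot.root ((Polynomial.X : Polynomial R) ^ n)) ^ n = 0 := by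
  rw [AdjoinRoot.root, ← map_pow, AdjoinRoot.mk_self]

variable (K : Type*) [Field K]

abbrev B1 : Type _ := AdjoinRoot ((Polynomial.X : Polynomial K) ^ 2)
abbrev B2 : Type _ := AdjoinRoot ((Polynomial.X : Polynomial (B1 K)) ^ 4)
abbrev B3 : Type _ := AdjoinRoot ((Polynomial.X : Polynomial (B2 K)) ^ 2)

abbrev I : Ideal (MvPolynomial (Fin 3) K) :=
  Ideal.span {(X 0 ^ 2 : MvPolynomial (Fin 3) K), X 1 ^ 4, X 2 ^ 2}

abbrev Q : Type _ := MvPolynomial (Fin 3) K ⧸ I K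

def rv : Fin 3 → B3 K :=
  ![algebraMap (B1 K) (B3 K) (AdjoinRoot.root _),
    algebraMap (B2 K) (B3 K) (AdjoinRoot.root _),
    AdjoinRoot.root _]

lemma hker : ∀ a ∈ I K, MvPolynomial.aeval (rv K) a = 0 := by
  have h : I K ≤ RingHom.ker (MvPolynomial.aeval (rv K)).toRingHom := by
    rw [Ideal.span_le]
    rintro a (rfl | rfl | rfl) <;>
      simp only [SetLike.mem_coe, RingHom.mem_ker, AlgHom.toRingHom_eq_coe, RingHom.coe_coe,
        map_pow, MvPolynomial.aeval_X, rv, Matrix.cons_val_zero, Matrix.cons_val_one, Matrix.head_cons, Matrix.cons_val_two, Matrix.tail_cons]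
    · rw [← map_pow, root_pow_self, map_zero]
    · rw [← map_pow, root_pow_self, map_zero]
    · exact root_pow_self 2
  exact fun a ha => h ha

def phi : Q K →ₐ[K] B3 K := Ideal.Quotient.liftₐ (I K) (MvPolynomial.aeval (rv K)) (hker K)

def q (i : Fin 3) : Q K := Ideal.Quotient.mk (I K) (X i)

lemma q_pow (i : Fin 3) (n : ℕ) (h : (X i : MvPolynomial (Fin 3) K) ^ n ∈ I K) :
    q K i ^ n = 0 := by
  rw [q, ← map_pow, Ideal.Quotient.eq_zero_iff_mem]; exact h

lemma q0 : q K 0 ^ 2 = 0 := q_pow K 0 2 (Ideal.subset_span (by simp))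
lemma q1 : q K 1 ^ 4 = 0 := q_pow K 1 4 (Ideal.subset_span (by simp))
lemma q2 : q K 2 ^ 2 = 0 := q_pow K 2 2 (Ideal.subset_span (by simp))

def psi1 : B1 K →+* Q K :=
  AdjoinRoot.lift (algebraMap K (Q K)) (q K 0) (by simp [q0 K])

def psi2 : B2 K →+* Q K :=
  AdjoinRoot.lift (psi1 K) (q K 1) (by simp [q1 K])

def psi3 : B3 K →+* Q K :=
  AdjoinRoot.lift (psi2 K) (q K 2) (by simp [q2 K])


lemma adjoinRoot_ringHom_ext {R S : Type*} [CommRing R] [CommRing S] {f : Polynomial R}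
    {g₁ g₂ : AdjoinRoot f →+* S}
    (hC : ∀ a, g₁ (AdjoinRoot.of f a) = g₂ (AdjoinRoot.of f a))
    (hX : g₁ (AdjoinRoot.root f) = g₂ (AdjoinRoot.root f)) : g₁ = g₂ := by
  have h : g₁.comp (AdjoinRoot.mk f) = g₂.comp (AdjoinRoot.mk f) := by
    apply Polynomial.ringHom_ext
    · intro a
      simpa only [RingHom.comp_apply, AdjoinRoot.mk_C] using hC a
    · simpa only [RingHom.comp_apply, AdjoinRoot.mk_X] using hX
  exact RingHom.ext fun x => AdjoinRoot.induction_on f x fun p => RingHom.congr_fun h p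

lemma phi_mk (p : MvPolynomial (Fin 3) K) :
    phi K (Ideal.Quotient.mk (I K) p) = MvPolynomial.aeval (rv K) p := by
  rw [phi, Ideal.Quotient.liftₐ_apply]
  rfl

lemma phi_q (i : Fin 3) : phi K (q K i) = rv K i := by
  rw [q, phi_mk, MvPolynomial.aeval_X]

lemma psi3_of (a : B2 K) : psi3 K (AdjoinRoot.of _ a) = psi2 K a := AdjoinRoot.lift_of _
lemma psi2_of (a : B1 K) : psi2 K (AdjoinRoot.of _ a) = psi1 K a := AdjoinRoot.lift_of _
lemma psi1_of (a : K) : psi1 K (AdjoinRoot.of _ a) = algebraMap K (Q K) a := AdjoinRoot.lift_of _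

lemma psi3_algebraMap (a : K) :
    psi3 K (algebraMap K (B3 K) a) = algebraMap K (Q K) a := by
  rw [AdjoinRoot.algebraMap_eq' , RingHom.comp_apply, psi3_of,
    AdjoinRoot.algebraMap_eq', RingHom.comp_apply, psi2_of,
    AdjoinRoot.algebraMap_eq, psi1_of]

lemma psi3_rv (i : Fin 3) : psi3 K (rv K i) = q K i := by
  fin_cases i
  · show psi3 K (algebraMap (B1 K) (B3 K) (AdjoinRoot.root _)) = q K 0
    rw [AdjoinRoot.algebraMap_eq', RingHom.comp_apply, psi3_of,
      AdjoinRoot.algebraMap_eq, psi2_of, psi1]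
    exact AdjoinRoot.lift_root _
  · show psi3 K (algebraMap (B2 K) (B3 K) (AdjoinRoot.root _)) = q K 1
    rw [AdjoinRoot.algebraMap_eq, psi3_of, psi2]
    exact AdjoinRoot.lift_root _
  · show psi3 K (AdjoinRoot.root _) = q K 2
    rw [psi3]
    exact AdjoinRoot.lift_root _

lemma psi_phi : (psi3 K).comp (phi K).toRingHom = RingHom.id (Q K) := by
  apply Ideal.Quotient.ringHom_ext
  apply MvPolynomial.ringHom_ext
  · intro a
    simp only [RingHom.comp_apply, RingHom.id_apply, AlgHom.toRingHom_eq_coe, RingHom.coe_coe]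
    rw [phi_mk, MvPolynomial.aeval_C, psi3_algebraMap]
    rfl
  · intro i
    simp only [RingHom.comp_apply, RingHom.id_apply, AlgHom.toRingHom_eq_coe, RingHom.coe_coe]
    rw [phi_mk, MvPolynomial.aeval_X, psi3_rv]
    rfl

lemma phi_psi1 : ((phi K).toRingHom).comp (psi1 K) = algebraMap (B1 K) (B3 K) := by
  apply adjoinRoot_ringHom_ext
  · intro a
    rw [RingHom.comp_apply, psi1_of]
    rw [show ((phi K).toRingHom) (algebraMap K (Q K) a) = algebraMap K (B3 K) a from (phi K).commutes a]
    rw [← AdjoinRoot.algebraMap_eq, ← IsScalarTower.algebraMap_apply]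
  · rw [RingHom.comp_apply]
    rw [show psi1 K (AdjoinRoot.root _) = q K 0 from AdjoinRoot.lift_root _]
    exact phi_q K 0

lemma phi_psi2 : ((phi K).toRingHom).comp (psi2 K) = algebraMap (B2 K) (B3 K) := by
  apply adjoinRoot_ringHom_ext
  · intro a
    rw [RingHom.comp_apply, psi2_of, ← RingHom.comp_apply, phi_psi1,
      ← AdjoinRoot.algebraMap_eq, ← IsScalarTower.algebraMap_apply]
  · rw [RingHom.comp_apply]
    rw [show psi2 K (AdjoinRoot.root _) = q K 1 from AdjoinRoot.lift_root _]
    simp only [AlgHom.toRingHom_eq_coe, RingHom.coe_coe]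
    rw [phi_q]
    show algebraMap (B2 K) (B3 K) (AdjoinRoot.root _) = _
    rw [AdjoinRoot.algebraMap_eq]

lemma phi_psi : ((phi K).toRingHom).comp (psi3 K) = RingHom.id (B3 K) := by
  apply adjoinRoot_ringHom_ext
  · intro a
    rw [RingHom.comp_apply, psi3_of, ← RingHom.comp_apply, phi_psi2, RingHom.id_apply,
      AdjoinRoot.algebraMap_eq]
  · rw [RingHom.comp_apply]
    rw [show psi3 K (AdjoinRoot.root _) = q K 2 from AdjoinRoot.lift_root _]
    simp only [AlgHom.toRingHom_eq_coe, RingHom.coe_coe]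
    rw [phi_q]
    rfl

def e : Q K ≃ₐ[K] B3 K :=
  AlgEquiv.ofRingEquiv (f := RingEquiv.ofRingHom (phi K).toRingHom (psi3 K) (phi_psi K) (psi_phi K))
    (fun x => (phi K).commutes x)

def pb1 : PowerBasis K (B1 K) := AdjoinRoot.powerBasis' (Polynomial.monic_X_pow 2)
def pb2 : PowerBasis (B1 K) (B2 K) := AdjoinRoot.powerBasis' (Polynomial.monic_X_pow 4)
def pb3 : PowerBasis (B2 K) (B3 K) := AdjoinRoot.powerBasis' (Polynomial.monic_X_pow 2)

lemma pb1_dim : (pb1 K).dim = 2 := by simp [pb1]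
instance : Nontrivial (B1 K) :=
  nontrivial_of_ne _ _ ((pb1 K).basis.ne_zero ⟨0, by rw [pb1_dim]; norm_num⟩)
lemma pb2_dim : (pb2 K).dim = 4 := by simp [pb2]
instance : Nontrivial (B2 K) :=
  nontrivial_of_ne _ _ ((pb2 K).basis.ne_zero ⟨0, by rw [pb2_dim]; norm_num⟩)
lemma pb3_dim : (pb3 K).dim = 2 := by simp [pb3]

instance : Module.Free K (B1 K) := Module.Free.of_basis (pb1 K).basis
instance : Module.Free (B1 K) (B2 K) := Module.Free.of_basis (pb2 K).basis
instance : Module.Free (B2 K) (B3 K) := Module.Free.of_basis (pb3 K).basis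

instance : Module.Free K (B2 K) :=
  Module.Free.of_basis ((pb1 K).basis.smulTower (pb2 K).basis)

lemma finrank_Q : Module.finrank K (Q K) = 16 := by
  rw [(e K).toLinearEquiv.finrank_eq]
  have h1 : Module.finrank K (B1 K) = 2 := by rw [(pb1 K).finrank, pb1_dim]
  have h2 : Module.finrank (B1 K) (B2 K) = 4 := by rw [(pb2 K).finrank, pb2_dim]
  have h3 : Module.finrank (B2 K) (B3 K) = 2 := by rw [(pb3 K).finrank, pb3_dim]
  have t2 : Module.finrank K (B2 K) = 8 := by
    rw [← Module.finrank_mul_finrank K (B1 K) (B2 K), h1, h2]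
  rw [← Module.finrank_mul_finrank K (B2 K) (B3 K), t2, h3]

end
end Stmt15Aux


open MvPolynomial

/-- Generic hyperplane section of type `E_8^0 F_4`: over `K = k(ξ,η,θ,ι)`, for
`F = z^2 + x^3 + (ξ*x + η*y + θ*z + ι)*y^4`, the Tjurina ideal equals
`(x^2, y^4, z^2)` and the Tjurina algebra has `K`-dimension 16. -/
theorem stmt_15 (k : Type*) [Field k] [CharP k 2]
    (K : Type*)
    [Field K] [Algebra (MvPolynomial (Fin 4) k) K] [IsFractionRing (MvPolynomial (Fin 4) k) K]
    (ξ η θ ι : K)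
    (hξ : ξ = algebraMap (MvPolynomial (Fin 4) k) K (X 0))
    (hη : η = algebraMap (MvPolynomial (Fin 4) k) K (X 1))
    (hθ : θ = algebraMap (MvPolynomial (Fin 4) k) K (X 2))
    (hι : ι = algebraMap (MvPolynomial (Fin 4) k) K (X 3))
    (F : MvPolynomial (Fin 3) K)
    (hF : F = X 2 ^ 2 + X 0 ^ 3 + (C ξ * X 0 + C η * X 1 + C θ * X 2 + C ι) * X 1 ^ 4) :
    Ideal.span {pderiv 0 F, pderiv 1 F, pderiv 2 F, F} =
      Ideal.span {(X 0 ^ 2 : MvPolynomial (Fin 3) K), X 1 ^ 4, X 2 ^ 2} ∧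
    Module.finrank K
      (MvPolynomial (Fin 3) K ⧸
        Ideal.span {(X 0 ^ 2 : MvPolynomial (Fin 3) K), X 1 ^ 4, X 2 ^ 2}) = 16 := by
  have hinj := IsFractionRing.injective (MvPolynomial (Fin 4) k) K
  haveI : CharP K 2 := charP_of_injective_algebraMap hinj 2
  have hη0 : η ≠ 0 := by
    rw [hη]
    intro h
    exact MvPolynomial.X_ne_zero 1 (hinj (by simpa using h))
  have h2 : (2 : MvPolynomial (Fin 3) K) = 0 := by
    exact_mod_cast CharP.cast_eq_zero (MvPolynomial (Fin 3) K) 2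
  have hd0 : pderiv 0 F = X 0 ^ 2 + C ξ * X 1 ^ 4 := by
    rw [hF]
    simp [pderiv_mul, pderiv_pow, pderiv_X_self, pderiv_X_of_ne]
    linear_combination (X 0 ^ 2 : MvPolynomial (Fin 3) K) * h2
  have hd1 : pderiv 1 F = C η * X 1 ^ 4 := by
    rw [hF]
    simp [pderiv_mul, pderiv_pow, pderiv_X_self, pderiv_X_of_ne]
    linear_combination (2 * (C ξ * X 0 + C η * X 1 + C θ * X 2 + C ι) * X 1 ^ 3 :
      MvPolynomial (Fin 3) K) * h2
  have hd2 : pderiv 2 F = C θ * X 1 ^ 4 := by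
    rw [hF]
    simp [pderiv_mul, pderiv_pow, pderiv_X_self, pderiv_X_of_ne]
    linear_combination (X 2 : MvPolynomial (Fin 3) K) * h2
  set J : Ideal (MvPolynomial (Fin 3) K) := Ideal.span {X 0 ^ 2, X 1 ^ 4, X 2 ^ 2} with hJ
  set S : Ideal (MvPolynomial (Fin 3) K) :=
    Ideal.span {pderiv 0 F, pderiv 1 F, pderiv 2 F, F} with hS
  have hy : (X 1 ^ 4 : MvPolynomial (Fin 3) K) ∈ J := Ideal.subset_span (by simp)
  have hx : (X 0 ^ 2 : MvPolynomial (Fin 3) K) ∈ J := Ideal.subset_span (by simp)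
  have hz : (X 2 ^ 2 : MvPolynomial (Fin 3) K) ∈ J := Ideal.subset_span (by simp)
  constructor
  · apply le_antisymm
    · rw [hS, Ideal.span_le]
      rintro a (rfl | rfl | rfl | rfl)
      · rw [hd0]
        exact add_mem hx (Ideal.mul_mem_left _ _ hy)
      · rw [hd1]
        exact Ideal.mul_mem_left _ _ hy
      · rw [hd2]
        exact Ideal.mul_mem_left _ _ hy
      · rw [hF]
        refine add_mem (add_mem hz ?_) (Ideal.mul_mem_left _ _ hy)
        rw [show (X 0 : MvPolynomial (Fin 3) K) ^ 3 = X 0 * X 0 ^ 2 by ring]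
        exact Ideal.mul_mem_left _ _ hx
    · have hd1m : pderiv 1 F ∈ S := Ideal.subset_span (by simp)
      have hym : (X 1 ^ 4 : MvPolynomial (Fin 3) K) ∈ S := by
        have h := Ideal.mul_mem_left S (C η⁻¹) hd1m
        rwa [hd1, ← mul_assoc, ← C_mul, inv_mul_cancel₀ hη0, C_1, one_mul] at h
      have hxm : (X 0 ^ 2 : MvPolynomial (Fin 3) K) ∈ S := by
        have h0 : pderiv 0 F ∈ S := Ideal.subset_span (by simp)
        have h := sub_mem h0 (Ideal.mul_mem_left S (C ξ) hym)
        rwa [hd0, add_sub_cancel_right] at h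
      have hzm : (X 2 ^ 2 : MvPolynomial (Fin 3) K) ∈ S := by
        have hFm : F ∈ S := Ideal.subset_span (by simp)
        have h3 : (X 0 : MvPolynomial (Fin 3) K) ^ 3 ∈ S := by
          rw [show (X 0 : MvPolynomial (Fin 3) K) ^ 3 = X 0 * X 0 ^ 2 by ring]
          exact Ideal.mul_mem_left _ _ hxm
        have h := sub_mem (sub_mem hFm h3)
          (Ideal.mul_mem_left S (C ξ * X 0 + C η * X 1 + C θ * X 2 + C ι) hym)
        rw [hF] at h
        rw [show (X 2 : MvPolynomial (Fin 3) K) ^ 2 =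
          (X 2 ^ 2 + X 0 ^ 3 + (C ξ * X 0 + C η * X 1 + C θ * X 2 + C ι) * X 1 ^ 4) - X 0 ^ 3 -
            (C ξ * X 0 + C η * X 1 + C θ * X 2 + C ι) * X 1 ^ 4 by ring]
        exact h
      rw [hJ, Ideal.span_le]
      rintro a (rfl | rfl | rfl)
      · exact hxm
      · exact hym
      · exact hzm
  · exact Stmt15Aux.finrank_Q K
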